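/- Let G = (V,E) be a graph with V = {1,…,n}, let f(x) = ∑_{{i,j}∈E} x_i x_j, and let X(f) = conv{(x, f(x)) : x ∈ [0,1]^n}. Then for every x ∈ [0,1]^n, max{z : (x,z) ∈ X(f)} = ∑_{{i,j}∈E} min{x_i, x_j}; that is, the point (x, ∑_{{i,j}∈E} min{x_i, x_j}) belongs to X(f), and every (x,z) ∈ X(f) satisfies z ≤ ∑_{{i,j}∈E} min{x_i, x_j}. -/

import Mathlib

open Finset

/-- The quadratic function `f(x) = ∑_{ij ∈ E} x_i x_j` of a graph given by its edge set
`E`, a finite set of ordered pairs `(i, j)` with `i < j`. -/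
def fGraph (E : Finset (ℕ × ℕ)) (x : ℕ → ℝ) : ℝ :=
  ∑ e ∈ E, x e.1 * x e.2

/-- `X(f)`: the convex hull of the graph of `f` over the cube `[0,1]^n`. -/
noncomputable def XfGraph (n : ℕ) (E : Finset (ℕ × ℕ)) : Set ((ℕ → ℝ) × ℝ) :=
  convexHull ℝ {p : (ℕ → ℝ) × ℝ |
    (∀ i ∈ Finset.Icc 1 n, 0 ≤ p.1 i ∧ p.1 i ≤ 1) ∧
    (∀ i ∉ Finset.Icc 1 n, p.1 i = 0) ∧ p.2 = fGraph E p.1}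

lemma edge_mem_aux {n : ℕ} {E : Finset (ℕ × ℕ)}
    (hE : ∀ e ∈ E, 1 ≤ e.1 ∧ e.1 < e.2 ∧ e.2 ≤ n) {e : ℕ × ℕ} (he : e ∈ E) :
    e.1 ∈ Finset.Icc 1 n ∧ e.2 ∈ Finset.Icc 1 n := by
  obtain ⟨h1, h2, h3⟩ := hE e he
  constructor <;> simp only [Finset.mem_Icc] <;> omega

lemma base_mem_aux (n : ℕ) (E : Finset (ℕ × ℕ))
    (hE : ∀ e ∈ E, 1 ≤ e.1 ∧ e.1 < e.2 ∧ e.2 ≤ n) (x : ℕ → ℝ)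
    (hx01 : ∀ i ∈ Finset.Icc 1 n, x i = 0 ∨ x i = 1)
    (hx0 : ∀ i ∉ Finset.Icc 1 n, x i = 0) :
    (x, ∑ e ∈ E, min (x e.1) (x e.2)) ∈ XfGraph n E := by
  apply subset_convexHull
  refine ⟨?_, hx0, ?_⟩
  · intro i hi; rcases hx01 i hi with h | h <;> simp [h]
  · simp only [fGraph]
    apply Finset.sum_congr rfl
    intro e he
    obtain ⟨h1, h2⟩ := edge_mem_aux hE he
    rcases hx01 _ h1 with h | h <;> rcases hx01 _ h2 with h' | h' <;> simp [h, h']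

lemma attain_aux (n : ℕ) (E : Finset (ℕ × ℕ))
    (hE : ∀ e ∈ E, 1 ≤ e.1 ∧ e.1 < e.2 ∧ e.2 ≤ n) :
    ∀ (k : ℕ) (x : ℕ → ℝ),
      (((Finset.Icc 1 n).image x).filter (fun v => 0 < v ∧ v < 1)).card ≤ k →
      (∀ i ∈ Finset.Icc 1 n, 0 ≤ x i ∧ x i ≤ 1) →
      (∀ i ∉ Finset.Icc 1 n, x i = 0) →
      (x, ∑ e ∈ E, min (x e.1) (x e.2)) ∈ XfGraph n E := by
  intro k
  induction k with
  | zero =>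
    intro x hc hx hx0
    apply base_mem_aux n E hE x _ hx0
    intro i hi
    by_contra h
    push_neg at h
    obtain ⟨h0, h1⟩ := h
    obtain ⟨hi0, hi1⟩ := hx i hi
    have hx_mem : x i ∈ ((Finset.Icc 1 n).image x).filter (fun v => 0 < v ∧ v < 1) := by
      simp only [Finset.mem_filter, Finset.mem_image]
      exact ⟨⟨i, hi, rfl⟩, lt_of_le_of_ne hi0 (Ne.symm h0), lt_of_le_of_ne hi1 h1⟩
    have := Finset.card_pos.mpr ⟨_, hx_mem⟩
    omega
  | succ k ih =>
    intro x hc hx hx0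
    set F := ((Finset.Icc 1 n).image x).filter (fun v => 0 < v ∧ v < 1) with hF
    by_cases hk : F.card ≤ k
    · exact ih x hk hx hx0
    have hFcard : F.card = k + 1 := by omega
    have hne : F.Nonempty := Finset.card_pos.mp (by omega)
    set t := F.min' hne with htdef
    have htF : t ∈ F := F.min'_mem hne
    obtain ⟨htim, ht0, ht1⟩ : (t ∈ (Finset.Icc 1 n).image x) ∧ 0 < t ∧ t < 1 := by
      simpa [hF, Finset.mem_filter, and_assoc] using htF
    have h1t : (0:ℝ) < 1 - t := by linarith
    -- every positive coordinate is ≥ t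
    have ht_le : ∀ i ∈ Finset.Icc 1 n, 0 < x i → t ≤ x i := by
      intro i hi hpos
      rcases lt_or_ge (x i) 1 with hlt | hge
      · exact F.min'_le _ (by
          simp only [hF, Finset.mem_filter, Finset.mem_image]
          exact ⟨⟨i, hi, rfl⟩, hpos, hlt⟩)
      · linarith
    set y : ℕ → ℝ := fun i => if 0 < x i then 1 else 0 with hy
    set z : ℕ → ℝ := fun i => if 0 < x i then (x i - t) / (1 - t) else 0 with hz
    have hxz : ∀ i, ¬ 0 < x i → x i = 0 := by
      intro i hnpos
      by_cases hi : i ∈ Finset.Icc 1 n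
      · rcases (hx i hi).1.eq_or_lt with h | h
        · exact h.symm
        · exact absurd h hnpos
      · exact hx0 i hi
    -- memberships
    have hymem : (y, ∑ e ∈ E, min (y e.1) (y e.2)) ∈ XfGraph n E := by
      apply base_mem_aux n E hE
      · intro i _; simp only [hy]; split <;> simp
      · intro i hi; simp only [hy]; rw [if_neg]; rw [hx0 i hi]; simp
    have hzx : ∀ i ∈ Finset.Icc 1 n, 0 ≤ z i ∧ z i ≤ 1 := by
      intro i hi
      simp only [hz]
      split
      · rename_i hpos
        constructor
        · exact div_nonneg (by linarith [ht_le i hi hpos]) h1t.le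
        · rw [div_le_one h1t]; linarith [(hx i hi).2]
      · norm_num
    have hzx0 : ∀ i ∉ Finset.Icc 1 n, z i = 0 := by
      intro i hi; simp only [hz]; rw [if_neg]; rw [hx0 i hi]; simp
    have hzcard : (((Finset.Icc 1 n).image z).filter (fun v => 0 < v ∧ v < 1)).card ≤ k := by
      have hsub : ((Finset.Icc 1 n).image z).filter (fun v => 0 < v ∧ v < 1) ⊆
          (F.erase t).image (fun v => (v - t) / (1 - t)) := by
        intro v hv
        simp only [Finset.mem_filter, Finset.mem_image] at hv
        obtain ⟨⟨i, hi, hvi⟩, hv0, hv1⟩ := hv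
        have hpos : 0 < x i := by
          by_contra hnpos
          rw [← hvi] at hv0
          simp only [hz, if_neg hnpos] at hv0
          exact lt_irrefl _ hv0
        have hvz : v = (x i - t) / (1 - t) := by rw [← hvi]; simp only [hz, if_pos hpos]
        have hxit : t < x i := by
          rw [hvz] at hv0
          have := (div_pos_iff.mp hv0)
          rcases this with ⟨h, _⟩ | ⟨_, h⟩ <;> linarith
        have hxi1 : x i < 1 := by
          rw [hvz, div_lt_one h1t] at hv1; linarith
        simp only [Finset.mem_image]
        refine ⟨x i, ?_, hvz.symm⟩
        apply Finset.mem_erase.mpr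
        refine ⟨ne_of_gt hxit, ?_⟩
        simp only [hF, Finset.mem_filter, Finset.mem_image]
        exact ⟨⟨i, hi, rfl⟩, lt_trans ht0 hxit, hxi1⟩
      calc _ ≤ ((F.erase t).image (fun v => (v - t) / (1 - t))).card := Finset.card_le_card hsub
        _ ≤ (F.erase t).card := Finset.card_image_le
        _ = k := by rw [Finset.card_erase_of_mem htF, hFcard]; omega
    have hzmem : (z, ∑ e ∈ E, min (z e.1) (z e.2)) ∈ XfGraph n E := ih z hzcard hzx hzx0
    -- convex combination
    have hconv := (convex_convexHull ℝ _) hymem hzmem ht0.le (by linarith : (0:ℝ) ≤ 1 - t)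
      (by ring : t + (1 - t) = 1)
    have key : t • (y, ∑ e ∈ E, min (y e.1) (y e.2)) + (1 - t) • (z, ∑ e ∈ E, min (z e.1) (z e.2))
        = (x, ∑ e ∈ E, min (x e.1) (x e.2)) := by
      have hcoord : ∀ i, t * y i + (1 - t) * z i = x i := by
        intro i
        by_cases hpos : 0 < x i
        · simp only [hy, hz, if_pos hpos]
          field_simp
          ring
        · simp only [hy, hz, if_neg hpos, hxz i hpos]; ring
      have hmin : ∀ e ∈ E, t * min (y e.1) (y e.2) + (1 - t) * min (z e.1) (z e.2)
          = min (x e.1) (x e.2) := by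
        intro e he
        obtain ⟨h1, h2⟩ := edge_mem_aux hE he
        by_cases hi : 0 < x e.1
        · by_cases hj : 0 < x e.2
          · have hmy : min (y e.1) (y e.2) = 1 := by simp [hy, if_pos hi, if_pos hj]
            have hmz : min (z e.1) (z e.2) = (min (x e.1) (x e.2) - t) / (1 - t) := by
              simp only [hz, if_pos hi, if_pos hj]
              rw [div_eq_mul_inv, div_eq_mul_inv, div_eq_mul_inv,
                ← min_mul_of_nonneg _ _ (by positivity : (0:ℝ) ≤ (1-t)⁻¹)]
              congr 1
              exact min_sub_sub_right _ _ _
            rw [hmy, hmz]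
            field_simp
            ring
          · have hx2 : x e.2 = 0 := hxz _ hj
            have : min (x e.1) (x e.2) = 0 := by
              rw [hx2]; exact min_eq_right hi.le
            rw [this]
            have : min (y e.1) (y e.2) = 0 := by
              simp only [hy, if_pos hi, if_neg hj]
              exact min_eq_right (by norm_num)
            rw [this]
            have : min (z e.1) (z e.2) = 0 := by
              simp only [hz, if_pos hi, if_neg hj]
              exact min_eq_right (div_nonneg (by linarith [ht_le _ h1 hi]) h1t.le)
            rw [this]; ring
        · have hx1 : x e.1 = 0 := hxz _ hi
          have : min (x e.1) (x e.2) = 0 := by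
            rw [hx1]; exact min_eq_left (hx _ h2).1
          rw [this]
          have : min (y e.1) (y e.2) = 0 := by
            simp only [hy, if_neg hi]
            exact min_eq_left (by split <;> norm_num)
          rw [this]
          have : min (z e.1) (z e.2) = 0 := by
            simp only [hz, if_neg hi]
            refine min_eq_left ?_
            split
            · rename_i hj
              exact div_nonneg (by linarith [ht_le _ h2 hj]) h1t.le
            · exact le_refl _
          rw [this]; ring
      ext
      · simp only [Prod.fst_add, Prod.smul_fst, Pi.add_apply, Pi.smul_apply, smul_eq_mul]
        exact hcoord _
      · simp only [Prod.snd_add, Prod.smul_snd, smul_eq_mul, Finset.mul_sum,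
          ← Finset.sum_add_distrib]
        exact Finset.sum_congr rfl hmin
    rwa [key] at hconv

lemma upper_aux (n : ℕ) (E : Finset (ℕ × ℕ))
    (hE : ∀ e ∈ E, 1 ≤ e.1 ∧ e.1 < e.2 ∧ e.2 ≤ n) :
    XfGraph n E ⊆ {p : (ℕ → ℝ) × ℝ | p.2 ≤ ∑ e ∈ E, min (p.1 e.1) (p.1 e.2)} := by
  apply convexHull_min
  · rintro ⟨x, zz⟩ ⟨hx, _, hz⟩
    simp only [Set.mem_setOf_eq] at hz ⊢
    rw [hz]
    simp only [fGraph]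
    apply Finset.sum_le_sum
    intro e he
    obtain ⟨h1, h2⟩ := edge_mem_aux hE he
    obtain ⟨hi0, hi1⟩ := hx _ h1
    obtain ⟨hj0, hj1⟩ := hx _ h2
    exact le_min (mul_le_of_le_one_right hi0 hj1) (mul_le_of_le_one_left hj0 hi1)
  · rintro ⟨x1, z1⟩ hp ⟨x2, z2⟩ hq a b ha hb hab
    simp only [Set.mem_setOf_eq] at hp hq ⊢
    simp only [Prod.smul_mk, Prod.mk_add_mk, Pi.add_apply, Pi.smul_apply, smul_eq_mul]
    calc a * z1 + b * z2
        ≤ a * (∑ e ∈ E, min (x1 e.1) (x1 e.2)) + b * (∑ e ∈ E, min (x2 e.1) (x2 e.2)) := by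
          gcongr
      _ = ∑ e ∈ E, (a * min (x1 e.1) (x1 e.2) + b * min (x2 e.1) (x2 e.2)) := by
          rw [Finset.mul_sum, Finset.mul_sum, Finset.sum_add_distrib]
      _ ≤ ∑ e ∈ E, min (a * x1 e.1 + b * x2 e.1) (a * x1 e.2 + b * x2 e.2) := by
          apply Finset.sum_le_sum
          intro e _
          apply le_min
          · gcongr <;> [exact min_le_left _ _; exact min_le_left _ _]
          · gcongr <;> [exact min_le_right _ _; exact min_le_right _ _]

/-- The upper boundary of `X(f)` is given by `∑_{ij ∈ E} min{x_i, x_j}`: this value is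
attained, and it is an upper bound for `z` over the fiber of `X(f)` above `x`. -/
theorem upper_boundary_of_Xf (n : ℕ) (E : Finset (ℕ × ℕ))
    (hE : ∀ e ∈ E, 1 ≤ e.1 ∧ e.1 < e.2 ∧ e.2 ≤ n)
    (x : ℕ → ℝ) (hx : ∀ i ∈ Finset.Icc 1 n, 0 ≤ x i ∧ x i ≤ 1)
    (hx0 : ∀ i ∉ Finset.Icc 1 n, x i = 0) :
    (x, ∑ e ∈ E, min (x e.1) (x e.2)) ∈ XfGraph n E ∧
    ∀ z : ℝ, (x, z) ∈ XfGraph n E → z ≤ ∑ e ∈ E, min (x e.1) (x e.2) := by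
  constructor
  · exact attain_aux n E hE _ x le_rfl hx hx0
  · intro z hz
    exact upper_aux n E hE hz
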